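/- Let q, r, b, c be even integers, and suppose the following identity holds in ℤ[A, A⁻¹]: (1 − A^{4q})(1 − A^{4b})(1 − A^{4c}) + (1 − A^{4r})(1 − A^{4b})(1 − A^{4c}) − (1 − A^{4q})(1 − A^{4r})(1 − A^{4b}) − (1 − A^{4q})(1 − A^{4r})(1 − A^{4c}) = (A² + A⁻²)² · [ (1 − A^{4b})(1 − A^{4c}) − (1 − A^{4q})(1 − A^{4r}) + A^{4c} − A^{4q} ]. Then q = c, and moreover either q = 0 or b = r. (This is the algebraic core of the theorem that if all of p,q,r,a,b,c are even with p ≠ a and the girth-3 diagrams K(p,q,r;a,b,c) and K(a,q,r;p,b,c) have equal Kauffman brackets, then either q = c = 0, or q = c and b = r.) -/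

import Mathlib

open LaurentPolynomial

noncomputable section

def zetaF (ζ : ℂˣ) : Multiplicative ℤ →* LaurentPolynomial ℂ where
  toFun n := C ((ζ ^ (Multiplicative.toAdd n) : ℂˣ) : ℂ) * T (Multiplicative.toAdd n)
  map_one' := by simp [T_zero]
  map_mul' x y := by
    simp only [toAdd_mul, zpow_add, Units.val_mul, map_mul, T_add]
    ring

def zetaHom (ζ : ℂˣ) : LaurentPolynomial ℤ →ₐ[ℤ] LaurentPolynomial ℂ :=
  AddMonoidAlgebra.lift ℤ _ ℤ (zetaF ζ)

lemma zetaHom_T (ζ : ℂˣ) (n : ℤ) :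
    zetaHom ζ (T n) = C ((ζ ^ n : ℂˣ) : ℂ) * T n := by
  have : (T n : LaurentPolynomial ℤ) = AddMonoidAlgebra.single n 1 := rfl
  rw [zetaHom, this, AddMonoidAlgebra.lift_single]
  simp [zetaF]

end

noncomputable section
lemma zetaHom_T_even (ζ : ℂˣ) (hζ : ((ζ:ℂ)) ^ (8:ℕ) = 1) {n : ℤ} (hn : Even n) :
    zetaHom ζ (T (4 * n)) = T (4 * n) := by
  obtain ⟨m, rfl⟩ := hn
  have h : 4 * (m + m) = 8 * m := by ring
  rw [zetaHom_T, h, zpow_mul]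
  norm_num [zpow_ofNat, hζ]

def zeta8 : ℂˣ := Units.mk0 (Complex.exp (Real.pi * Complex.I / 4)) (Complex.exp_ne_zero _)

lemma zeta8_pow4 : ((zeta8 : ℂ)) ^ (4:ℕ) = -1 := by
  rw [zeta8, Units.val_mk0, ← Complex.exp_nat_mul]
  have : (4:ℕ) * (Real.pi * Complex.I / 4) = Real.pi * Complex.I := by push_cast; ring
  rw [this, Complex.exp_pi_mul_I]

lemma zeta8_pow8 : ((zeta8 : ℂ)) ^ (8:ℕ) = 1 := by
  calc (zeta8:ℂ) ^ (8:ℕ) = ((zeta8:ℂ) ^ (4:ℕ))^2 := by ring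
  _ = 1 := by rw [zeta8_pow4]; ring

lemma sq_image (ζ : ℂˣ) (h4 : ((ζ:ℂ))^(4:ℕ) = -1) :
    (zetaHom ζ ((T 2 + T (-2))^2)) = -T 4 + 2 - T (-4) := by
  have e2 : ((ζ ^ (2:ℤ) : ℂˣ) : ℂ) * ((ζ ^ (2:ℤ) : ℂˣ) : ℂ) = -1 := by
    rw [← Units.val_mul, ← zpow_add]; norm_num [zpow_ofNat, h4]
  have e2' : ((ζ ^ (-2:ℤ) : ℂˣ) : ℂ) * ((ζ ^ (-2:ℤ) : ℂˣ) : ℂ) = -1 := by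
    rw [← Units.val_mul, ← zpow_add]; norm_num [zpow_ofNat, h4]
  have e0 : ((ζ ^ (2:ℤ) : ℂˣ) : ℂ) * ((ζ ^ (-2:ℤ) : ℂˣ) : ℂ) = 1 := by
    rw [← Units.val_mul, ← zpow_add]; norm_num
  have hT2 : (T 2 * T 2 : LaurentPolynomial ℂ) = T 4 := by rw [← T_add]; norm_num
  have hT2' : (T (-2) * T (-2) : LaurentPolynomial ℂ) = T (-4) := by rw [← T_add]; norm_num
  have hT0 : (T 2 * T (-2) : LaurentPolynomial ℂ) = 1 := by rw [← T_add]; norm_num [T_zero]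
  rw [map_pow, map_add, zetaHom_T, zetaHom_T]
  have E2 : (C ((ζ ^ (2:ℤ) : ℂˣ) : ℂ) : LaurentPolynomial ℂ) * C ((ζ ^ (2:ℤ) : ℂˣ) : ℂ) = -1 := by
    rw [← map_mul, e2]; simp
  have E2' : (C ((ζ ^ (-2:ℤ) : ℂˣ) : ℂ) : LaurentPolynomial ℂ) * C ((ζ ^ (-2:ℤ) : ℂˣ) : ℂ) = -1 := by
    rw [← map_mul, e2']; simp
  have E0 : (C ((ζ ^ (2:ℤ) : ℂˣ) : ℂ) : LaurentPolynomial ℂ) * C ((ζ ^ (-2:ℤ) : ℂˣ) : ℂ) = 1 := by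
    rw [← map_mul, e0]; simp
  linear_combination (2*(T 2:LaurentPolynomial ℂ)*T (-2))*E0 + (T 2:LaurentPolynomial ℂ)^2*E2
    + (T (-2):LaurentPolynomial ℂ)^2*E2' + 2*hT0 - hT2 - hT2'
end

lemma one_T (n : ℤ) : zetaHom 1 (T n) = T n := by rw [zetaHom_T]; simp

lemma sq_one : ((T 2 + T (-2) : LaurentPolynomial ℂ))^2 = T 4 + 2 + T (-4) := by
  have hT2 : (T 2 * T 2 : LaurentPolynomial ℂ) = T 4 := by rw [← T_add]; norm_num
  have hT2' : (T (-2) * T (-2) : LaurentPolynomial ℂ) = T (-4) := by rw [← T_add]; norm_num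
  have hT0 : (T 2 * T (-2) : LaurentPolynomial ℂ) = 1 := by rw [← T_add]; norm_num [T_zero]
  linear_combination hT2 + hT2' + 2*hT0

lemma coeff4 (w x y z a : ℤ) :
    ((T w - T x + T y - T z : LaurentPolynomial ℂ)).coeff a
      = (if w = a then (1:ℂ) else 0) - (if x = a then 1 else 0)
        + (if y = a then 1 else 0) - (if z = a then 1 else 0) := by
  have h1 : ((T w - T x + T y - T z : LaurentPolynomial ℂ)).coeff a
      = ((T w - T x + T y : LaurentPolynomial ℂ)).coeff a - ((T z : LaurentPolynomial ℂ)).coeff a := by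
    rw [AddMonoidAlgebra.coeff_sub, Finsupp.sub_apply]
  have h2 : ((T w - T x + T y : LaurentPolynomial ℂ)).coeff a
      = ((T w - T x : LaurentPolynomial ℂ)).coeff a + ((T y : LaurentPolynomial ℂ)).coeff a := by
    rw [AddMonoidAlgebra.coeff_add, Finsupp.add_apply]
  have h3 : ((T w - T x : LaurentPolynomial ℂ)).coeff a
      = ((T w : LaurentPolynomial ℂ)).coeff a - ((T x : LaurentPolynomial ℂ)).coeff a := by
    rw [AddMonoidAlgebra.coeff_sub, Finsupp.sub_apply]
  rw [h1, h2, h3, T_apply, T_apply, T_apply, T_apply]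

/-- If `q, r, b, c` are even and the identity
`(1-A^{4q})(1-A^{4b})(1-A^{4c}) + (1-A^{4r})(1-A^{4b})(1-A^{4c})
 - (1-A^{4q})(1-A^{4r})(1-A^{4b}) - (1-A^{4q})(1-A^{4r})(1-A^{4c})
 = (A²+A⁻²)² ((1-A^{4b})(1-A^{4c}) - (1-A^{4q})(1-A^{4r}) + A^{4c} - A^{4q})`
holds in `ℤ[A,A⁻¹]`, then `q = c`, and moreover `q = 0` or `b = r`. -/
theorem even_bracket_identity_core (q r b c : ℤ)
    (hq : Even q) (hr : Even r) (hb : Even b) (hc : Even c)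
    (hid : ((1 : LaurentPolynomial ℤ) - T (4 * q)) * (1 - T (4 * b)) * (1 - T (4 * c))
        + (1 - T (4 * r)) * (1 - T (4 * b)) * (1 - T (4 * c))
        - (1 - T (4 * q)) * (1 - T (4 * r)) * (1 - T (4 * b))
        - (1 - T (4 * q)) * (1 - T (4 * r)) * (1 - T (4 * c))
        = ((T 2 + T (-2) : LaurentPolynomial ℤ)) ^ 2 *
          ((1 - T (4 * b)) * (1 - T (4 * c)) - (1 - T (4 * q)) * (1 - T (4 * r))
            + T (4 * c) - T (4 * q))) :
    q = c ∧ (q = 0 ∨ b = r) := by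
  have h1 := congrArg (zetaHom 1) hid
  have h2 := congrArg (zetaHom zeta8) hid
  simp only [map_add, map_sub, map_mul, map_pow, map_one, one_T] at h1
  rw [sq_one] at h1
  simp only [map_add, map_sub, map_mul, map_one, sq_image zeta8 zeta8_pow4,
    zetaHom_T_even zeta8 zeta8_pow8 hq, zetaHom_T_even zeta8 zeta8_pow8 hr,
    zetaHom_T_even zeta8 zeta8_pow8 hb, zetaHom_T_even zeta8 zeta8_pow8 hc] at h2
  have hz : (2 : LaurentPolynomial ℂ) * ((T 4 + T (-4)) *
      ((1 - T (4*b)) * (1 - T (4*c)) - (1 - T (4*q)) * (1 - T (4*r)) + T (4*c) - T (4*q))) = 0 := by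
    linear_combination h2 - h1
  have h2ne : (2 : LaurentPolynomial ℂ) ≠ 0 := by
    have : (2 : LaurentPolynomial ℂ) = C 2 := (map_ofNat C 2).symm
    rw [this]
    intro h
    have := congrArg (fun f : LaurentPolynomial ℂ => f.coeff 0) h
    simp [C_apply] at this
  have hTne : (T 4 + T (-4) : LaurentPolynomial ℂ) ≠ 0 := by
    intro h
    have := congrArg (fun f : LaurentPolynomial ℂ => f.coeff 4) h
    rw [show ((T 4 + T (-4) : LaurentPolynomial ℂ)).coeff 4
        = (T 4 : LaurentPolynomial ℂ).coeff 4 + (T (-4) : LaurentPolynomial ℂ).coeff 4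
      by rw [AddMonoidAlgebra.coeff_add, Finsupp.add_apply]] at this
    simp [T_apply] at this
  have hE : ((1:LaurentPolynomial ℂ) - T (4*b)) * (1 - T (4*c)) - (1 - T (4*q)) * (1 - T (4*r)) + T (4*c) - T (4*q) = 0 := by
    rcases mul_eq_zero.mp hz with h | h
    · exact absurd h h2ne
    rcases mul_eq_zero.mp h with h | h
    · exact absurd h hTne
    exact h
  have hE2 : (T (4*b+4*c) : LaurentPolynomial ℂ) - T (4*b) + T (4*r) - T (4*r+4*q) = 0 := by
    rw [T_add, T_add]
    linear_combination hE
  have key : ∀ a : ℤ, (if 4*b+4*c = a then (1:ℂ) else 0) - (if 4*b = a then 1 else 0)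
      + (if 4*r = a then 1 else 0) - (if 4*r+4*q = a then 1 else 0) = 0 := by
    intro a
    have h := congrArg (fun f : LaurentPolynomial ℂ => f.coeff a) hE2
    rw [coeff4, show ((0 : LaurentPolynomial ℂ)).coeff a = 0 from rfl] at h
    exact h
  rcases eq_or_ne q 0 with h0 | h0
  · have hk := key (4*b+4*c)
    rw [h0] at hk
    have hc0 : c = 0 := by
      split_ifs at hk <;> first | omega | norm_num at hk
    exact ⟨by omega, Or.inl h0⟩
  · have hc0 : c ≠ 0 := by
      intro hcc
      have hk := key (4*r+4*q)
      split_ifs at hk <;> first | omega | norm_num at hk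
    have hbc : 4*b+4*c = 4*r+4*q := by
      have hk := key (4*b+4*c)
      split_ifs at hk <;> first | omega | norm_num at hk
    have hbr : b = r := by
      have hk := key (4*b)
      split_ifs at hk <;> first | omega | norm_num at hk
    exact ⟨by omega, Or.inr hbr⟩
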